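/- Suppose tit-for-tat is essentially unbeatable in the symmetric two-player game (X, π), i.e., for any finite cycle of opponent actions played against tit-for-tat the total relative payoff is bounded. Then for every 3-cycle of actions x_0, x_1, x_2 ∈ X, the relative payoffs satisfy Δ(x_0,x_2) + Δ(x_1,x_0) + Δ(x_2,x_1) = 0, where Δ(x,y) = π(x,y) − π(y,x). -/

import Mathlib

lemma tft_aux_le (S B : ℝ) (h : ∀ n : ℕ, (n : ℝ) * S ≤ B) : S ≤ 0 := by
  by_contra hS
  push_neg at hS
  obtain ⟨n, hn⟩ := exists_nat_gt (B / S)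
  have hB : B < (n : ℝ) * S := (div_lt_iff₀ hS).mp hn
  linarith [h n]

lemma tft_cycle_sum {X : Type*} (Δ : X → X → ℝ) (a b c : X) :
    ∀ n : ℕ, ∑ t ∈ Finset.range (3 * n),
      Δ ((fun t => if t % 3 = 0 then a else if t % 3 = 1 then b else c) (t + 1))
        ((fun t => if t % 3 = 0 then a else if t % 3 = 1 then b else c) t)
      = (n : ℝ) * (Δ b a + Δ c b + Δ a c) := by
  intro n
  induction n with
  | zero => simp
  | succ k ih =>
    have h3 : 3 * (k + 1) = (3 * k + 1 + 1) + 1 := by ring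
    rw [h3, Finset.sum_range_succ, Finset.sum_range_succ, Finset.sum_range_succ, ih]
    have h0 : (3 * k) % 3 = 0 := by omega
    have h1 : (3 * k + 1) % 3 = 1 := by omega
    have h2 : (3 * k + 2) % 3 = 2 := by omega
    have h3' : (3 * k + 1 + 1) = 3 * k + 2 := by ring
    have h4 : (3 * k + 2 + 1) % 3 = 0 := by omega
    simp only [h3', h0, h1, h2, h4]
    norm_num
    push_cast
    ring

/-- If tit-for-tat is essentially unbeatable, i.e., against every periodic cycle
of opponent actions the cumulative relative payoff is bounded, then every
3-cycle of actions has zero total relative payoff: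
`Δ(x₀,x₂) + Δ(x₁,x₀) + Δ(x₂,x₁) = 0`. -/
theorem tit_for_tat_unbeatable_three_cycle {X : Type*} (π : X → X → ℝ)
    (Δ : X → X → ℝ) (hΔ : ∀ x y, Δ x y = π x y - π y x)
    (hunbeat : ∀ x : ℕ → X, (∃ n, 0 < n ∧ ∀ t, x (t + n) = x t) →
      ∃ B : ℝ, ∀ T, ∑ t ∈ Finset.range T, Δ (x (t + 1)) (x t) ≤ B) :
    ∀ x₀ x₁ x₂ : X, Δ x₀ x₂ + Δ x₁ x₀ + Δ x₂ x₁ = 0 := by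
  intro x₀ x₁ x₂
  have key : ∀ a b c : X, Δ b a + Δ c b + Δ a c ≤ 0 := by
    intro a b c
    obtain ⟨B, hB⟩ := hunbeat (fun t => if t % 3 = 0 then a else if t % 3 = 1 then b else c)
      ⟨3, by norm_num, fun t => by simp [Nat.add_mod_right]⟩
    refine tft_aux_le _ B (fun n => ?_)
    rw [← tft_cycle_sum Δ a b c n]
    exact hB (3 * n)
  have h1 := key x₂ x₀ x₁  -- Δ x₀ x₂ + Δ x₁ x₀ + Δ x₂ x₁ ≤ 0
  have h2 := key x₀ x₂ x₁  -- Δ x₂ x₀ + Δ x₁ x₂ + Δ x₀ x₁ ≤ 0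
  have e1 := hΔ x₀ x₂; have e2 := hΔ x₁ x₀; have e3 := hΔ x₂ x₁
  have e4 := hΔ x₂ x₀; have e5 := hΔ x₀ x₁; have e6 := hΔ x₁ x₂
  linarith
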